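/- Let k ≥ 1, f_i, μ_i > 0 with ∑ f_i = 1, β, γ > 0. Define V(y) = ∑_i y_i(1 + ln y_i − ln((β/γ)μ_i)) − (∑_i y_i) ln(∑_i y_i) + ∑_i (f_i − y_i) ln(f_i − y_i) for y with 0 < y_i < f_i. Then ∂V/∂y_i = ln( y_i / ((β/γ) μ_i (f_i − y_i) ∑_j y_j) ), and consequently H(y, ∂V/∂y) = 0, where H(y,θ) = γ ∑_i (e^{θ_i} − 1)·((β/γ)(∑_j y_j) μ_i (f_i − y_i) − y_i e^{−θ_i}). -/

import Mathlib

noncomputable def Vsusc (k : ℕ) (f mu : Fin k → ℝ) (β γ : ℝ) (y : Fin k → ℝ) : ℝ :=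
  (∑ i, y i * (1 + Real.log (y i) - Real.log ((β / γ) * mu i)))
    - (∑ i, y i) * Real.log (∑ i, y i)
    + ∑ i, (f i - y i) * Real.log (f i - y i)

theorem stmt_6 (k : ℕ) (hk : 1 ≤ k) (f mu : Fin k → ℝ)
    (hf : ∀ i, 0 < f i) (hfs : ∑ i, f i = 1) (hm : ∀ i, 0 < mu i)
    (β γ : ℝ) (hβ : 0 < β) (hγ : 0 < γ)
    (y : Fin k → ℝ) (hy : ∀ i, y i ∈ Set.Ioo 0 (f i))
    (θ : Fin k → ℝ)
    (hθ : ∀ i, θ i = Real.log (y i / ((β / γ) * mu i * (f i - y i) * ∑ j, y j))) :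
    (∀ i, HasDerivAt (fun t => Vsusc k f mu β γ (Function.update y i t))
        (Real.log (y i / ((β / γ) * mu i * (f i - y i) * ∑ j, y j))) (y i)) ∧
      γ * ∑ i, (Real.exp (θ i) - 1) *
        ((β / γ) * (∑ j, y j) * mu i * (f i - y i) - y i * Real.exp (-θ i)) = 0 := by
  have hne : Nonempty (Fin k) := ⟨⟨0, hk⟩⟩
  have hS : 0 < ∑ j, y j :=
    Finset.sum_pos (fun j _ => (hy j).1) Finset.univ_nonempty
  constructor
  · intro i
    have hy0 : 0 < y i := (hy i).1
    have hw : 0 < f i - y i := sub_pos.mpr (hy i).2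
    have ha0' : 0 < (β / γ) * mu i := mul_pos (div_pos hβ hγ) (hm i)
    set a := (β / γ) * mu i with ha
    have ha0 : 0 < a := ha0'
    set S' := ∑ j ∈ Finset.univ.erase i, y j with hS'
    have hSsplit : ∑ j, y j = y i + S' := by
      rw [hS', Finset.add_sum_erase _ _ (Finset.mem_univ i)]
    have hu : 0 < y i + S' := hSsplit ▸ hS
    set C1 := ∑ j ∈ Finset.univ.erase i,
        y j * (1 + Real.log (y j) - Real.log ((β / γ) * mu j)) with hC1
    set C2 := ∑ j ∈ Finset.univ.erase i, (f j - y j) * Real.log (f j - y j) with hC2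
    have key : ∀ t, Vsusc k f mu β γ (Function.update y i t) =
        (t * (1 + Real.log t - Real.log a) + C1)
          - (t + S') * Real.log (t + S')
          + ((f i - t) * Real.log (f i - t) + C2) := by
      intro t
      have hupd : ∀ j ∈ Finset.univ.erase i, Function.update y i t j = y j :=
        fun j hj => Function.update_of_ne (Finset.mem_erase.mp hj).1 _ _
      have e1 : (∑ j, Function.update y i t j *
            (1 + Real.log (Function.update y i t j) - Real.log ((β / γ) * mu j)))
          = t * (1 + Real.log t - Real.log a) + C1 := by
        rw [← Finset.add_sum_erase _ _ (Finset.mem_univ i), Function.update_self, hC1]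
        congr 1
        exact Finset.sum_congr rfl fun j hj => by rw [hupd j hj]
      have e2 : (∑ j, Function.update y i t j) = t + S' := by
        rw [← Finset.add_sum_erase _ _ (Finset.mem_univ i), Function.update_self, hS']
        congr 1
        exact Finset.sum_congr rfl fun j hj => hupd j hj
      have e3 : (∑ j, (f j - Function.update y i t j) *
            Real.log (f j - Function.update y i t j))
          = (f i - t) * Real.log (f i - t) + C2 := by
        rw [← Finset.add_sum_erase _ _ (Finset.mem_univ i), Function.update_self, hC2]
        congr 1
        exact Finset.sum_congr rfl fun j hj => by rw [hupd j hj]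
      rw [Vsusc, e1, e2, e3]
    have hfun : (fun t => Vsusc k f mu β γ (Function.update y i t)) =
        fun t => (t * (1 + Real.log t - Real.log a) + C1)
          - (t + S') * Real.log (t + S')
          + ((f i - t) * Real.log (f i - t) + C2) := funext key
    rw [hfun]
    have h1 : HasDerivAt (fun t : ℝ => t * (1 + Real.log t - Real.log a))
        (1 * (1 + Real.log (y i) - Real.log a) + y i * (y i)⁻¹) (y i) :=
      (hasDerivAt_id (y i)).mul
        (((Real.hasDerivAt_log hy0.ne').const_add 1).sub_const (Real.log a))
    have hadd : HasDerivAt (fun t : ℝ => t + S') 1 (y i) :=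
      (hasDerivAt_id (y i)).add_const S'
    have h2 : HasDerivAt (fun t : ℝ => (t + S') * Real.log (t + S'))
        (1 * Real.log (y i + S') + (y i + S') * (1 / (y i + S'))) (y i) :=
      hadd.mul (hadd.log hu.ne')
    have hsub : HasDerivAt (fun t : ℝ => f i - t) (-1) (y i) := by
      simpa using (hasDerivAt_id (y i)).const_sub (f i)
    have h3 : HasDerivAt (fun t : ℝ => (f i - t) * Real.log (f i - t))
        ((-1) * Real.log (f i - y i) + (f i - y i) * ((-1) / (f i - y i))) (y i) :=
      hsub.mul (hsub.log hw.ne')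
    have H := ((h1.add_const C1).sub h2).add (h3.add_const C2)
    refine H.congr_deriv ?_
    rw [hSsplit, Real.log_div hy0.ne' (mul_pos (mul_pos ha0 hw) hu).ne',
      Real.log_mul (mul_pos ha0 hw).ne' hu.ne', Real.log_mul ha0.ne' hw.ne']
    field_simp
    ring
  · have hz : ∀ i ∈ Finset.univ, (Real.exp (θ i) - 1) *
        ((β / γ) * (∑ j, y j) * mu i * (f i - y i) - y i * Real.exp (-θ i)) = 0 := by
      intro i _
      have hy0 : 0 < y i := (hy i).1
      have hw : 0 < f i - y i := sub_pos.mpr (hy i).2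
      have hc : 0 < (β / γ) * mu i * (f i - y i) * ∑ j, y j :=
        mul_pos (mul_pos (mul_pos (div_pos hβ hγ) (hm i)) hw) hS
      have hpos : 0 < y i / ((β / γ) * mu i * (f i - y i) * ∑ j, y j) :=
        div_pos hy0 hc
      have : (β / γ) * (∑ j, y j) * mu i * (f i - y i) - y i * Real.exp (-θ i) = 0 := by
        rw [hθ i, Real.exp_neg, Real.exp_log hpos, inv_div,
          mul_div_cancel₀ _ hy0.ne']
        ring
      rw [this, mul_zero]
    rw [Finset.sum_eq_zero hz, mul_zero]
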